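/- (Inconsistency of the constant-effect DMLATEIV estimand under effect and compliance heterogeneity.) Suppose E[β0(X)] ≠ 0. If a constant θ̂ ∈ ℝ satisfies the unconditional moment equation E[(Y − q0(X) − θ̂·(T − p0(X)))·(Z − r0(X))] = 0, then θ̂ = E[θ0(X)·β0(X)] / E[β0(X)]; i.e., the constant estimand is the compliance-weighted average of the heterogeneous effect θ0, which differs from E[θ0(X)] whenever θ0(X) and β0(X) are correlated. -/
import Mathlib

open MeasureTheory

section Aux

variable {Ω : Type*} {m m0 : MeasurableSpace Ω} {μ : Measure Ω}

lemma integrable_of_bdd [IsFiniteMeasure μ] {f : Ω → ℝ}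
    (hm : Measurable f) (hb : ∃ C, ∀ ω, |f ω| ≤ C) : Integrable f μ := by
  obtain ⟨C, hC⟩ := hb
  exact ⟨hm.aestronglyMeasurable,
    HasFiniteIntegral.of_bounded (C := C) (ae_of_all _ fun ω => by simpa using hC ω)⟩

lemma bdd_mul {f₁ f₂ : Ω → ℝ} (h1 : ∃ C, ∀ ω, |f₁ ω| ≤ C) (h2 : ∃ C, ∀ ω, |f₂ ω| ≤ C) :
    ∃ C, ∀ ω, |f₁ ω * f₂ ω| ≤ C := by
  obtain ⟨C1, h1⟩ := h1; obtain ⟨C2, h2⟩ := h2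
  refine ⟨(|C1| + 1) * (|C2| + 1), fun ω => ?_⟩
  rw [abs_mul]
  have e1 : |f₁ ω| ≤ |C1| + 1 := (h1 ω).trans ((le_abs_self C1).trans (by linarith))
  have e2 : |f₂ ω| ≤ |C2| + 1 := (h2 ω).trans ((le_abs_self C2).trans (by linarith))
  exact mul_le_mul e1 e2 (abs_nonneg _) (by positivity)

lemma bdd_sub {f₁ f₂ : Ω → ℝ} (h1 : ∃ C, ∀ ω, |f₁ ω| ≤ C) (h2 : ∃ C, ∀ ω, |f₂ ω| ≤ C) :
    ∃ C, ∀ ω, |f₁ ω - f₂ ω| ≤ C := by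
  obtain ⟨C1, h1⟩ := h1; obtain ⟨C2, h2⟩ := h2
  exact ⟨C1 + C2, fun ω => (abs_sub _ _).trans (add_le_add (h1 ω) (h2 ω))⟩

/-- If `g` is `m`-measurable, then `∫ g·f = ∫ g·E[f|m]`. -/
lemma integral_mul_condexp' (hm : m ≤ m0) (hμ : @IsProbabilityMeasure Ω m0 μ)
    {g f : Ω → ℝ} (hg : StronglyMeasurable[m] g)
    (hgf : Integrable (fun ω => g ω * f ω) μ) (hf : Integrable f μ) :
    ∫ ω, g ω * f ω ∂μ = ∫ ω, g ω * (μ[f|m]) ω ∂μ := by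
  haveI : IsProbabilityMeasure μ := hμ
  have h := condExp_mul_of_stronglyMeasurable_left hg hgf hf
  calc ∫ ω, g ω * f ω ∂μ = ∫ ω, (g * f) ω ∂μ := rfl
    _ = ∫ ω, (μ[g * f|m]) ω ∂μ := (integral_condExp hm).symm
    _ = ∫ ω, g ω * (μ[f|m]) ω ∂μ := integral_congr_ae h

end Aux

theorem stmt_9
    {Ω 𝓧 : Type*} [MeasurableSpace Ω] [MeasurableSpace 𝓧] [StandardBorelSpace 𝓧]
    (μ : Measure Ω) [IsProbabilityMeasure μ]
    (Y T Z : Ω → ℝ) (X : Ω → 𝓧)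
    (hY : Measurable Y) (hT : Measurable T) (hZ : Measurable Z) (hX : Measurable X)
    (hYbdd : ∃ C, ∀ ω, |Y ω| ≤ C) (hTbdd : ∃ C, ∀ ω, |T ω| ≤ C)
    (hZbdd : ∃ C, ∀ ω, |Z ω| ≤ C)
    (θ0 f0 : 𝓧 → ℝ) (hθ0m : Measurable θ0) (hf0m : Measurable f0)
    (hθ0bdd : ∃ C, ∀ x, |θ0 x| ≤ C) (hf0bdd : ∃ C, ∀ x, |f0 x| ≤ C)
    (hIV : μ[fun ω => Y ω - θ0 (X ω) * T ω - f0 (X ω) |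
        MeasurableSpace.comap (fun ω => (Z ω, X ω)) inferInstance] =ᵐ[μ] 0)
    (q0 p0 r0 : 𝓧 → ℝ) (hq0m : Measurable q0) (hp0m : Measurable p0) (hr0m : Measurable r0)
    (hq0bdd : ∃ C, ∀ x, |q0 x| ≤ C) (hp0bdd : ∃ C, ∀ x, |p0 x| ≤ C)
    (hr0bdd : ∃ C, ∀ x, |r0 x| ≤ C)
    (hq0 : (fun ω => q0 (X ω)) =ᵐ[μ] μ[Y | MeasurableSpace.comap X inferInstance])
    (hp0 : (fun ω => p0 (X ω)) =ᵐ[μ] μ[T | MeasurableSpace.comap X inferInstance])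
    (hr0 : (fun ω => r0 (X ω)) =ᵐ[μ] μ[Z | MeasurableSpace.comap X inferInstance])
    (h0 : ℝ × 𝓧 → ℝ) (hh0m : Measurable h0) (hh0bdd : ∃ C, ∀ zx, |h0 zx| ≤ C)
    (hh0 : (fun ω => h0 (Z ω, X ω)) =ᵐ[μ]
        μ[T | MeasurableSpace.comap (fun ω => (Z ω, X ω)) inferInstance])
    (β0 : 𝓧 → ℝ) (hβ0m : Measurable β0) (hβ0bdd : ∃ C, ∀ x, |β0 x| ≤ C)
    (hβ0 : (fun ω => β0 (X ω)) =ᵐ[μ]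
        μ[fun ω => (T ω - p0 (X ω)) * (Z ω - r0 (X ω)) | MeasurableSpace.comap X inferInstance])
    (V0 : 𝓧 → ℝ) (hV0m : Measurable V0) (hV0bdd : ∃ C, ∀ x, |V0 x| ≤ C)
    (hV0 : (fun ω => V0 (X ω)) =ᵐ[μ]
        μ[fun ω => (h0 (Z ω, X ω) - p0 (X ω)) ^ 2 | MeasurableSpace.comap X inferInstance])
    (hβne : (∫ ω, β0 (X ω) ∂μ) ≠ 0) (θhat : ℝ)
    (hmom : (∫ ω, (Y ω - q0 (X ω) - θhat * (T ω - p0 (X ω))) * (Z ω - r0 (X ω)) ∂μ) = 0) :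
    θhat = (∫ ω, θ0 (X ω) * β0 (X ω) ∂μ) / ∫ ω, β0 (X ω) ∂μ := by
  classical
  have hmX : MeasurableSpace.comap X inferInstance ≤ ‹MeasurableSpace Ω› := hX.comap_le
  have hmZX : MeasurableSpace.comap (fun ω => (Z ω, X ω)) inferInstance
      ≤ ‹MeasurableSpace Ω› := (hZ.prodMk hX).comap_le
  set mX : MeasurableSpace Ω := MeasurableSpace.comap X inferInstance
  set mZX : MeasurableSpace Ω := MeasurableSpace.comap (fun ω => (Z ω, X ω)) inferInstance
  have hXm : Measurable[mX] X := Measurable.of_comap_le le_rfl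
  have hpair : Measurable[mZX] (fun ω => (Z ω, X ω)) := Measurable.of_comap_le le_rfl
  -- the instrument residual
  have hgmZX : StronglyMeasurable[mZX] (fun ω => Z ω - r0 (X ω)) :=
    ((measurable_fst.comp hpair).sub
      (hr0m.comp (measurable_snd.comp hpair))).stronglyMeasurable
  have hr0Xb : ∃ C, ∀ ω, |r0 (X ω)| ≤ C := ⟨hr0bdd.choose, fun ω => hr0bdd.choose_spec (X ω)⟩
  have hgm := hZ.sub (hr0m.comp hX)
  have hgb : ∃ C, ∀ ω, |Z ω - r0 (X ω)| ≤ C := bdd_sub hZbdd hr0Xb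
  have hgint : Integrable (fun ω => Z ω - r0 (X ω)) μ := integrable_of_bdd hgm hgb
  -- Step B : ∫ c(X) * (Z - r0 X) = 0 for bounded measurable c
  have stepB : ∀ (c : 𝓧 → ℝ), Measurable c → (∃ C, ∀ x, |c x| ≤ C) →
      ∫ ω, c (X ω) * (Z ω - r0 (X ω)) ∂μ = 0 := by
    intro c hcm hcb
    have hcXm : StronglyMeasurable[mX] (fun ω => c (X ω)) :=
      (hcm.comp hXm).stronglyMeasurable
    have hcXb : ∃ C, ∀ ω, |c (X ω)| ≤ C := ⟨hcb.choose, fun ω => hcb.choose_spec (X ω)⟩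
    have hint : Integrable (fun ω => c (X ω) * (Z ω - r0 (X ω))) μ :=
      integrable_of_bdd ((hcm.comp hX).mul hgm) (bdd_mul hcXb hgb)
    rw [integral_mul_condexp' hmX ‹_› hcXm hint hgint]
    have hgc : μ[fun ω => Z ω - r0 (X ω) | mX] =ᵐ[μ] 0 := by
      have h1 : μ[fun ω => Z ω - r0 (X ω) | mX] =ᵐ[μ]
          (μ[Z | mX]) - (μ[fun ω => r0 (X ω) | mX]) := by
        have := condExp_sub (m := mX) (μ := μ) (f := Z) (g := fun ω => r0 (X ω))
          (integrable_of_bdd hZ hZbdd) (integrable_of_bdd (hr0m.comp hX) hr0Xb)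
        exact this
      have h2 : μ[(fun ω => r0 (X ω)) | mX] = fun ω => r0 (X ω) :=
        condExp_of_stronglyMeasurable hmX ((hr0m.comp hXm).stronglyMeasurable)
          (integrable_of_bdd (hr0m.comp hX) hr0Xb)
      filter_upwards [h1, hr0] with ω e1 e3
      have e2 := congrFun h2 ω
      simp only [Pi.sub_apply, Pi.zero_apply] at *
      rw [e1, e2, ← e3]; ring
    calc ∫ ω, c (X ω) * (μ[fun ω => Z ω - r0 (X ω)|mX]) ω ∂μ
        = ∫ ω, c (X ω) * (0:ℝ) ∂μ := by
          refine integral_congr_ae ?_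
          filter_upwards [hgc] with ω h
          rw [h]; rfl
      _ = 0 := by simp
  -- Step A : ∫ (Y - θ0 X * T - f0 X) * (Z - r0 X) = 0
  have hθ0Xb : ∃ C, ∀ ω, |θ0 (X ω)| ≤ C := ⟨hθ0bdd.choose, fun ω => hθ0bdd.choose_spec (X ω)⟩
  have hf0Xb : ∃ C, ∀ ω, |f0 (X ω)| ≤ C := ⟨hf0bdd.choose, fun ω => hf0bdd.choose_spec (X ω)⟩
  have hp0Xb : ∃ C, ∀ ω, |p0 (X ω)| ≤ C := ⟨hp0bdd.choose, fun ω => hp0bdd.choose_spec (X ω)⟩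
  have hq0Xb : ∃ C, ∀ ω, |q0 (X ω)| ≤ C := ⟨hq0bdd.choose, fun ω => hq0bdd.choose_spec (X ω)⟩
  have hLm := (hY.sub ((hθ0m.comp hX).mul hT)).sub (hf0m.comp hX)
  have hLb : ∃ C, ∀ ω, |Y ω - θ0 (X ω) * T ω - f0 (X ω)| ≤ C :=
    bdd_sub (bdd_sub hYbdd (bdd_mul hθ0Xb hTbdd)) hf0Xb
  have hLint : Integrable (fun ω => Y ω - θ0 (X ω) * T ω - f0 (X ω)) μ :=
    integrable_of_bdd hLm hLb
  have stepA : ∫ ω, (Z ω - r0 (X ω)) * (Y ω - θ0 (X ω) * T ω - f0 (X ω)) ∂μ = 0 := by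
    have hint : Integrable
        (fun ω => (Z ω - r0 (X ω)) * (Y ω - θ0 (X ω) * T ω - f0 (X ω))) μ :=
      integrable_of_bdd (hgm.mul hLm) (bdd_mul hgb hLb)
    rw [integral_mul_condexp' hmZX ‹_› hgmZX hint hLint]
    calc ∫ ω, (Z ω - r0 (X ω)) *
          (μ[fun ω => Y ω - θ0 (X ω) * T ω - f0 (X ω)|mZX]) ω ∂μ
        = ∫ ω, (Z ω - r0 (X ω)) * (0:ℝ) ∂μ := by
          refine integral_congr_ae ?_
          filter_upwards [hIV] with ω h
          rw [h]; rfl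
      _ = 0 := by simp
  -- Step C : ∫ θ0 X * ((T - p0 X)*(Z - r0 X)) = ∫ θ0 X * β0 X
  have hWm := (hT.sub (hp0m.comp hX)).mul hgm
  have hWb : ∃ C, ∀ ω, |(T ω - p0 (X ω)) * (Z ω - r0 (X ω))| ≤ C :=
    bdd_mul (bdd_sub hTbdd hp0Xb) hgb
  have hWint : Integrable (fun ω => (T ω - p0 (X ω)) * (Z ω - r0 (X ω))) μ :=
    integrable_of_bdd hWm hWb
  have stepC : ∫ ω, θ0 (X ω) * ((T ω - p0 (X ω)) * (Z ω - r0 (X ω))) ∂μ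
      = ∫ ω, θ0 (X ω) * β0 (X ω) ∂μ := by
    have hint : Integrable
        (fun ω => θ0 (X ω) * ((T ω - p0 (X ω)) * (Z ω - r0 (X ω)))) μ :=
      integrable_of_bdd ((hθ0m.comp hX).mul hWm) (bdd_mul hθ0Xb hWb)
    rw [integral_mul_condexp' (g := fun ω => θ0 (X ω))
      (f := fun ω => (T ω - p0 (X ω)) * (Z ω - r0 (X ω))) hmX ‹_›
      ((hθ0m.comp hXm).stronglyMeasurable) hint hWint]
    refine integral_congr_ae ?_
    filter_upwards [hβ0] with ω h
    rw [← h]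
  -- Step D : ∫ (T - p0 X)*(Z - r0 X) = ∫ β0 X
  have stepD : ∫ ω, (T ω - p0 (X ω)) * (Z ω - r0 (X ω)) ∂μ = ∫ ω, β0 (X ω) ∂μ := by
    rw [← integral_condExp hmX (μ := μ)
      (f := fun ω => (T ω - p0 (X ω)) * (Z ω - r0 (X ω)))]
    exact (integral_congr_ae hβ0).symm
  -- expand the moment condition
  have hYgint : Integrable (fun ω => Y ω * (Z ω - r0 (X ω))) μ :=
    integrable_of_bdd (hY.mul hgm) (bdd_mul hYbdd hgb)
  have hq0gint : Integrable (fun ω => q0 (X ω) * (Z ω - r0 (X ω))) μ :=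
    integrable_of_bdd ((hq0m.comp hX).mul hgm) (bdd_mul hq0Xb hgb)
  have expand : (∫ ω, (Y ω - q0 (X ω) - θhat * (T ω - p0 (X ω))) * (Z ω - r0 (X ω)) ∂μ)
      = (∫ ω, Y ω * (Z ω - r0 (X ω)) ∂μ) - (∫ ω, q0 (X ω) * (Z ω - r0 (X ω)) ∂μ)
        - θhat * ∫ ω, (T ω - p0 (X ω)) * (Z ω - r0 (X ω)) ∂μ := by
    have e1 : (fun ω => (Y ω - q0 (X ω) - θhat * (T ω - p0 (X ω))) * (Z ω - r0 (X ω)))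
        = fun ω => Y ω * (Z ω - r0 (X ω)) - q0 (X ω) * (Z ω - r0 (X ω))
          - θhat * ((T ω - p0 (X ω)) * (Z ω - r0 (X ω))) := by
      funext ω; ring
    have i1 : Integrable
        (fun ω => Y ω * (Z ω - r0 (X ω)) - q0 (X ω) * (Z ω - r0 (X ω))) μ :=
      hYgint.sub hq0gint
    rw [e1, integral_sub i1 (hWint.const_mul θhat),
      integral_sub hYgint hq0gint, integral_const_mul]
  -- compute ∫ Y (Z - r0 X)
  have hθTgint : Integrable (fun ω => θ0 (X ω) * T ω * (Z ω - r0 (X ω))) μ :=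
    integrable_of_bdd (((hθ0m.comp hX).mul hT).mul hgm)
      (bdd_mul (bdd_mul hθ0Xb hTbdd) hgb)
  have hf0gint : Integrable (fun ω => f0 (X ω) * (Z ω - r0 (X ω))) μ :=
    integrable_of_bdd ((hf0m.comp hX).mul hgm) (bdd_mul hf0Xb hgb)
  have hYg : ∫ ω, Y ω * (Z ω - r0 (X ω)) ∂μ = ∫ ω, θ0 (X ω) * β0 (X ω) ∂μ := by
    have e1 : (fun ω => (Z ω - r0 (X ω)) * (Y ω - θ0 (X ω) * T ω - f0 (X ω)))
        = fun ω => Y ω * (Z ω - r0 (X ω)) - θ0 (X ω) * T ω * (Z ω - r0 (X ω))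
          - f0 (X ω) * (Z ω - r0 (X ω)) := by
      funext ω; ring
    have i2 : Integrable
        (fun ω => Y ω * (Z ω - r0 (X ω)) - θ0 (X ω) * T ω * (Z ω - r0 (X ω))) μ :=
      hYgint.sub hθTgint
    rw [e1, integral_sub i2 hf0gint, integral_sub hYgint hθTgint,
      stepB f0 hf0m hf0bdd, sub_zero, sub_eq_zero] at stepA
    rw [stepA]
    have e2 : (fun ω => θ0 (X ω) * T ω * (Z ω - r0 (X ω)))
        = fun ω => θ0 (X ω) * ((T ω - p0 (X ω)) * (Z ω - r0 (X ω)))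
          + (θ0 (X ω) * p0 (X ω)) * (Z ω - r0 (X ω)) := by
      funext ω; ring
    have hθWint : Integrable
        (fun ω => θ0 (X ω) * ((T ω - p0 (X ω)) * (Z ω - r0 (X ω)))) μ :=
      integrable_of_bdd ((hθ0m.comp hX).mul hWm) (bdd_mul hθ0Xb hWb)
    have hθpgint : Integrable
        (fun ω => (θ0 (X ω) * p0 (X ω)) * (Z ω - r0 (X ω))) μ :=
      integrable_of_bdd (((hθ0m.comp hX).mul (hp0m.comp hX)).mul hgm)
        (bdd_mul (bdd_mul hθ0Xb hp0Xb) hgb)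
    rw [e2, integral_add hθWint hθpgint,
      stepB (fun x => θ0 x * p0 x) (hθ0m.mul hp0m)
        (bdd_mul (f₁ := θ0) (f₂ := p0) hθ0bdd hp0bdd),
      add_zero, stepC]
  -- put it together
  rw [expand, hYg, stepB q0 hq0m hq0bdd, sub_zero, stepD] at hmom
  field_simp
  linarith [hmom]
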